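/- Let s ∈ (0,1), p ∈ [1,∞) with sp < 1, and let B = (0,ℓ₁) × (0,ℓ₂) ⊂ ℝ² be an open rectangle. Then ∫_B ∫_{B^c} |x - y|^{-(2+sp)} dy dx ≤ C · Per(B) · min{ℓ₁, ℓ₂}^{1-sp}, where Per(B) = 2(ℓ₁+ℓ₂) and C depends only on s, p. -/

import Mathlib

open MeasureTheory

section Aux

open Set Real intervalIntegral

/-- The volume of the unit ball in the Euclidean plane, as a real number. -/
noncomputable def ballC : ℝ := (volume (Metric.ball (0 : EuclideanSpace ℝ (Fin 2)) 1)).toReal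

lemma ballC_pos : 0 < ballC := by
  rw [ballC]
  refine ENNReal.toReal_pos (ne_of_gt (Metric.measure_ball_pos _ _ one_pos)) ?_
  exact (MeasureTheory.measure_ball_lt_top).ne

lemma coord_abs_le_norm (v : EuclideanSpace ℝ (Fin 2)) (i : Fin 2) : |v i| ≤ ‖v‖ := by
  rw [EuclideanSpace.norm_eq, ← Real.sqrt_sq_eq_abs]
  apply Real.sqrt_le_sqrt
  have := Finset.single_le_sum (f := fun j => ‖v j‖ ^ 2)
    (fun j _ => sq_nonneg _) (Finset.mem_univ i)
  simpa [Real.norm_eq_abs, sq_abs] using this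

lemma compl_ball_integral (q : ℝ) (hq : 0 < q) (x : EuclideanSpace ℝ (Fin 2)) (m : ℝ)
    (hm : 0 < m) :
    IntegrableOn (fun y => ‖x - y‖ ^ (-(2 + q))) {y | m ≤ ‖y - x‖} volume ∧
    ∫ y in {y : EuclideanSpace ℝ (Fin 2) | m ≤ ‖y - x‖}, ‖x - y‖ ^ (-(2 + q)) =
      2 * ballC * (m ^ (-q) / q) := by
  have hS : MeasurableSet {y : EuclideanSpace ℝ (Fin 2) | m ≤ ‖y - x‖} := by
    have : Continuous fun y : EuclideanSpace ℝ (Fin 2) => ‖y - x‖ := by fun_prop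
    exact (isClosed_le continuous_const this).measurableSet
  have hnn : ∀ y : EuclideanSpace ℝ (Fin 2), 0 ≤ ‖x - y‖ ^ (-(2 + q)) :=
    fun y => Real.rpow_nonneg (norm_nonneg _) _
  have hfin : (Module.finrank ℝ (EuclideanSpace ℝ (Fin 2)) : ℝ) < 2 + q := by
    rw [finrank_euclideanSpace_fin]; norm_num; linarith
  have hint0 : Integrable (fun y : EuclideanSpace ℝ (Fin 2) =>
      (1 + ‖y - x‖) ^ (-(2 + q))) volume :=
    (integrable_one_add_norm hfin).comp_sub_right x
  have hint : IntegrableOn (fun y => ‖x - y‖ ^ (-(2 + q))) {y | m ≤ ‖y - x‖} volume := by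
    refine Integrable.mono' ((hint0.const_mul ((1 + 1/m) ^ (2 + q))).restrict) ?_ ?_
    · have : Measurable fun y : EuclideanSpace ℝ (Fin 2) => ‖x - y‖ ^ (-(2 + q)) := by fun_prop
      exact this.aestronglyMeasurable
    · filter_upwards [ae_restrict_mem hS] with y hy
      have ht : 0 < ‖y - x‖ := lt_of_lt_of_le hm hy
      rw [Real.norm_eq_abs, abs_of_nonneg (hnn y), norm_sub_rev x y]
      have h1 : 1 + ‖y - x‖ ≤ (1 + 1/m) * ‖y - x‖ := by
        have : 1 ≤ ‖y - x‖ / m := (one_le_div hm).2 hy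
        calc 1 + ‖y - x‖ ≤ ‖y - x‖/m + ‖y - x‖ := by linarith
          _ = (1 + 1/m) * ‖y - x‖ := by ring
      have h2 : ((1 + 1/m) * ‖y - x‖) ^ (-(2 + q)) ≤ (1 + ‖y - x‖) ^ (-(2 + q)) :=
        Real.rpow_le_rpow_of_nonpos (by positivity) h1 (by linarith)
      rw [Real.mul_rpow (by positivity) ht.le] at h2
      calc ‖y - x‖ ^ (-(2 + q))
          = ((1 + 1/m) ^ (2 + q)) * ((1 + 1/m) ^ (-(2 + q)) * ‖y - x‖ ^ (-(2 + q))) := by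
            rw [← mul_assoc, ← Real.rpow_add (by positivity),
              show (2 + q) + -(2 + q) = (0:ℝ) by ring, Real.rpow_zero, one_mul]
        _ ≤ ((1 + 1/m) ^ (2 + q)) * (1 + ‖y - x‖) ^ (-(2 + q)) := by
            apply mul_le_mul_of_nonneg_left h2 (by positivity)
  refine ⟨hint, ?_⟩
  haveI : Nontrivial (EuclideanSpace ℝ (Fin 2)) :=
    Module.nontrivial_of_finrank_pos (R := ℝ) (by rw [finrank_euclideanSpace_fin]; norm_num)
  set g : ℝ → ℝ := Set.indicator (Ici m) (fun t => t ^ (-(2 + q))) with hg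
  have h1 : ∫ y in {y : EuclideanSpace ℝ (Fin 2) | m ≤ ‖y - x‖}, ‖x - y‖ ^ (-(2 + q)) =
      ∫ y : EuclideanSpace ℝ (Fin 2), g (‖y - x‖) := by
    rw [← MeasureTheory.integral_indicator hS]
    congr 1 with y
    by_cases hy : m ≤ ‖y - x‖ <;>
      simp [hg, Set.indicator_apply, hy, norm_sub_rev x y]
  have h2 : ∫ y : EuclideanSpace ℝ (Fin 2), g (‖y - x‖) =
      ∫ y : EuclideanSpace ℝ (Fin 2), g ‖y‖ :=
    integral_sub_right_eq_self (fun y => g ‖y‖) x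
  have h3 := MeasureTheory.integral_fun_norm_addHaar
    (volume : Measure (EuclideanSpace ℝ (Fin 2))) g
  rw [finrank_euclideanSpace_fin] at h3
  have h4 : ∫ t in Ioi (0:ℝ), t ^ (2 - 1) • g t = m ^ (-q) / q := by
    have e1 : ∀ t : ℝ, t ^ (2-1) • g t =
        Set.indicator (Ici m) (fun t => t * t ^ (-(2 + q))) t := by
      intro t
      by_cases ht : t ∈ Ici m
      · simp [hg, Set.indicator_of_mem ht, smul_eq_mul]
      · simp [hg, Set.indicator_of_notMem ht]
    simp only [e1]
    rw [setIntegral_indicator measurableSet_Ici]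
    have e2 : Ioi (0:ℝ) ∩ Ici m = Ici m :=
      Set.inter_eq_self_of_subset_right (fun t ht => lt_of_lt_of_le hm ht)
    rw [e2, integral_Ici_eq_integral_Ioi]
    have e3 : ∫ t in Ioi m, t * t ^ (-(2 + q)) = ∫ t in Ioi m, t ^ (-(1 + q)) := by
      apply setIntegral_congr_fun measurableSet_Ioi
      intro t ht
      have ht0 : 0 < t := lt_trans hm ht
      dsimp only
      rw [show -(1 + q) = 1 + -(2 + q) by ring, Real.rpow_add ht0, Real.rpow_one]
    rw [e3, integral_Ioi_rpow_of_lt (by linarith) hm]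
    rw [show -(1 + q) + 1 = -q by ring]
    rw [neg_div, div_neg, neg_neg]
  rw [h1, h2, h3, h4]
  simp only [ballC, Measure.real, nsmul_eq_mul, smul_eq_mul, Nat.cast_ofNat]
  ring

lemma inner_bound (q ℓ₁ ℓ₂ : ℝ) (hq : 0 < q) (x : EuclideanSpace ℝ (Fin 2))
    (hx : x ∈ ({x | x 0 ∈ Set.Ioo 0 ℓ₁ ∧ x 1 ∈ Set.Ioo 0 ℓ₂} :
      Set (EuclideanSpace ℝ (Fin 2)))) :
    ∫ y in ({x | x 0 ∈ Set.Ioo 0 ℓ₁ ∧ x 1 ∈ Set.Ioo 0 ℓ₂} :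
        Set (EuclideanSpace ℝ (Fin 2)))ᶜ, ‖x - y‖ ^ (-(2 + q)) ≤
      2 * ballC * ((min (min (x 0) (ℓ₁ - x 0)) (min (x 1) (ℓ₂ - x 1))) ^ (-q) / q) := by
  obtain ⟨⟨hx1, hx2⟩, hx3, hx4⟩ := hx
  set B : Set (EuclideanSpace ℝ (Fin 2)) :=
    {x | x 0 ∈ Set.Ioo 0 ℓ₁ ∧ x 1 ∈ Set.Ioo 0 ℓ₂} with hB
  set m : ℝ := min (min (x 0) (ℓ₁ - x 0)) (min (x 1) (ℓ₂ - x 1)) with hm_def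
  have hm : 0 < m :=
    lt_min (lt_min hx1 (by linarith)) (lt_min hx3 (by linarith))
  obtain ⟨hint, hval⟩ := compl_ball_integral q hq x m hm
  have hnn : ∀ y : EuclideanSpace ℝ (Fin 2), 0 ≤ ‖x - y‖ ^ (-(2 + q)) :=
    fun y => Real.rpow_nonneg (norm_nonneg _) _
  have hsub : Bᶜ ⊆ {y : EuclideanSpace ℝ (Fin 2) | m ≤ ‖y - x‖} := by
    intro y hy
    have hcases : y 0 ≤ 0 ∨ ℓ₁ ≤ y 0 ∨ y 1 ≤ 0 ∨ ℓ₂ ≤ y 1 := by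
      by_contra h
      push_neg at h
      exact hy ⟨⟨h.1, h.2.1⟩, h.2.2.1, h.2.2.2⟩
    have key : ∀ i : Fin 2, |y i - x i| ≤ ‖y - x‖ := by
      intro i
      have := coord_abs_le_norm (y - x) i
      simpa using this
    rcases hcases with h | h | h | h
    · have hma : m ≤ x 0 := le_trans (min_le_left _ _) (min_le_left _ _)
      refine le_trans (le_trans hma ?_) (key 0)
      calc x 0 ≤ x 0 - y 0 := by linarith
        _ ≤ |x 0 - y 0| := le_abs_self _
        _ = |y 0 - x 0| := abs_sub_comm _ _
    · have hma : m ≤ ℓ₁ - x 0 := le_trans (min_le_left _ _) (min_le_right _ _)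
      refine le_trans (le_trans hma ?_) (key 0)
      calc ℓ₁ - x 0 ≤ y 0 - x 0 := by linarith
        _ ≤ |y 0 - x 0| := le_abs_self _
    · have hma : m ≤ x 1 := le_trans (min_le_right _ _) (min_le_left _ _)
      refine le_trans (le_trans hma ?_) (key 1)
      calc x 1 ≤ x 1 - y 1 := by linarith
        _ ≤ |x 1 - y 1| := le_abs_self _
        _ = |y 1 - x 1| := abs_sub_comm _ _
    · have hma : m ≤ ℓ₂ - x 1 := le_trans (min_le_right _ _) (min_le_right _ _)
      refine le_trans (le_trans hma ?_) (key 1)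
      calc ℓ₂ - x 1 ≤ y 1 - x 1 := by linarith
        _ ≤ |y 1 - x 1| := le_abs_self _
  have hmeas : Measurable fun y : EuclideanSpace ℝ (Fin 2) => ‖x - y‖ ^ (-(2 + q)) := by
    fun_prop
  calc ∫ y in Bᶜ, ‖x - y‖ ^ (-(2 + q))
      = (∫⁻ y in Bᶜ, ENNReal.ofReal (‖x - y‖ ^ (-(2 + q)))).toReal :=
        integral_eq_lintegral_of_nonneg_ae (Filter.Eventually.of_forall fun y => hnn y)
          hmeas.aestronglyMeasurable
    _ ≤ (∫⁻ y in {y : EuclideanSpace ℝ (Fin 2) | m ≤ ‖y - x‖},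
          ENNReal.ofReal (‖x - y‖ ^ (-(2 + q)))).toReal := by
        apply ENNReal.toReal_mono ?_ (lintegral_mono_set hsub)
        rw [← ofReal_integral_eq_lintegral_ofReal hint
          (Filter.Eventually.of_forall fun y => hnn y)]
        exact ENNReal.ofReal_ne_top
    _ = ∫ y in {y : EuclideanSpace ℝ (Fin 2) | m ≤ ‖y - x‖}, ‖x - y‖ ^ (-(2 + q)) := by
        rw [← ofReal_integral_eq_lintegral_ofReal hint
          (Filter.Eventually.of_forall fun y => hnn y)]
        exact ENNReal.toReal_ofReal (integral_nonneg fun y => hnn y)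
    _ = 2 * ballC * (m ^ (-q) / q) := hval

/-- identification of `ℝ × ℝ` with the Euclidean plane -/
noncomputable def phi : ℝ × ℝ → EuclideanSpace ℝ (Fin 2) :=
  fun z => (MeasurableEquiv.toLp 2 (Fin 2 → ℝ))
    ((MeasurableEquiv.finTwoArrow (α := ℝ)).symm z)

lemma phi_measurePreserving : MeasurePreserving phi volume volume :=
  ((EuclideanSpace.volume_preserving_symm_measurableEquiv_toLp (Fin 2)).symm _).comp
    ((volume_preserving_finTwoArrow ℝ).symm _)

lemma phi_emb : MeasurableEmbedding phi :=
  ((MeasurableEquiv.toLp 2 (Fin 2 → ℝ)).measurableEmbedding).comp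
    (MeasurableEquiv.finTwoArrow (α := ℝ)).symm.measurableEmbedding

lemma phi_apply_zero (z : ℝ × ℝ) : phi z 0 = z.1 := rfl
lemma phi_apply_one (z : ℝ × ℝ) : phi z 1 = z.2 := rfl

lemma oneD_int (q ℓ : ℝ) (hq1 : q < 1) :
    IntegrableOn (fun t => t ^ (-q)) (Ioo (0:ℝ) ℓ) volume := by
  have := (intervalIntegrable_rpow' (a := 0) (b := ℓ) (r := -q) (by linarith)).1
  exact this.mono_set Set.Ioo_subset_Ioc_self

lemma oneD_int' (q ℓ : ℝ) (hq1 : q < 1) :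
    IntegrableOn (fun t => (ℓ - t) ^ (-q)) (Ioo (0:ℝ) ℓ) volume := by
  have h := (intervalIntegrable_rpow' (a := 0) (b := ℓ) (r := -q)
    (by linarith)).comp_sub_left ℓ
  simp only [sub_zero, sub_self] at h
  exact h.symm.1.mono_set Set.Ioo_subset_Ioc_self

lemma oneD_val (q ℓ : ℝ) (hq1 : q < 1) (hℓ : 0 < ℓ) :
    ∫ t in Ioo (0:ℝ) ℓ, t ^ (-q) = ℓ ^ (1 - q) / (1 - q) := by
  rw [← integral_Ioc_eq_integral_Ioo, ← integral_of_le hℓ.le]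
  rw [integral_rpow (Or.inl (by linarith))]
  have h0 : (0:ℝ) ^ (-q + 1) = 0 := Real.zero_rpow (by linarith : (0:ℝ) < -q+1).ne'
  rw [h0, sub_zero, show -q + 1 = 1 - q by ring]

lemma oneD_val' (q ℓ : ℝ) (hq1 : q < 1) (hℓ : 0 < ℓ) :
    ∫ t in Ioo (0:ℝ) ℓ, (ℓ - t) ^ (-q) = ℓ ^ (1 - q) / (1 - q) := by
  rw [← integral_Ioc_eq_integral_Ioo, ← integral_of_le hℓ.le]
  rw [integral_comp_sub_left (fun t => t ^ (-q)) ℓ]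
  simp only [sub_self, sub_zero]
  rw [integral_of_le hℓ.le, integral_Ioc_eq_integral_Ioo]
  exact oneD_val q ℓ hq1 hℓ

lemma cross_bound (r a b : ℝ) (hr0 : 0 < r) (hr1 : r ≤ 1) (ha : 0 < a) (hb : 0 < b) :
    b * a ^ r ≤ (a + b) * (min a b) ^ r := by
  rcases le_total a b with h | h
  · rw [min_eq_left h]
    have h1 : 0 ≤ a ^ r := Real.rpow_nonneg ha.le r
    nlinarith
  · rw [min_eq_right h]
    have hbr : 0 ≤ b ^ r := Real.rpow_nonneg hb.le r
    have har : 0 ≤ a ^ r := Real.rpow_nonneg ha.le r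
    have hb1 : b ^ (1-r) * b ^ r = b := by
      rw [← Real.rpow_add hb, show (1:ℝ) - r + r = 1 by ring, Real.rpow_one]
    have ha1 : a ^ (1-r) * a ^ r = a := by
      rw [← Real.rpow_add ha, show (1:ℝ) - r + r = 1 by ring, Real.rpow_one]
    have h5 : b ^ (1-r) ≤ a ^ (1-r) := Real.rpow_le_rpow hb.le h (by linarith)
    have h6 : b ^ (1-r) * a ^ r * b ^ r ≤ a ^ (1-r) * a ^ r * b ^ r :=
      mul_le_mul_of_nonneg_right (mul_le_mul_of_nonneg_right h5 har) hbr
    nlinarith [h6, hb1, ha1, mul_nonneg hb.le hbr]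

end Aux

/-- The open rectangle `(0,ℓ₁) × (0,ℓ₂)` in the plane. -/
def planeRect (ℓ₁ ℓ₂ : ℝ) : Set (EuclideanSpace ℝ (Fin 2)) :=
  {x | x 0 ∈ Set.Ioo 0 ℓ₁ ∧ x 1 ∈ Set.Ioo 0 ℓ₂}

section Rect

open Set Real

lemma planeRect_measurableSet (ℓ₁ ℓ₂ : ℝ) : MeasurableSet (planeRect ℓ₁ ℓ₂) := by
  have h0 : Measurable fun x : EuclideanSpace ℝ (Fin 2) => x 0 := by fun_prop
  have h1 : Measurable fun x : EuclideanSpace ℝ (Fin 2) => x 1 := by fun_prop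
  exact (h0 measurableSet_Ioo).inter (h1 measurableSet_Ioo)

lemma phi_preimage (ℓ₁ ℓ₂ : ℝ) :
    phi ⁻¹' (planeRect ℓ₁ ℓ₂) = Ioo 0 ℓ₁ ×ˢ Ioo 0 ℓ₂ := by
  ext z
  simp [planeRect, phi_apply_zero, phi_apply_one, Set.mem_prod]

lemma rect_integral (q ℓ₁ ℓ₂ : ℝ) (hq : 0 < q) (hq1 : q < 1) (hℓ₁ : 0 < ℓ₁) (hℓ₂ : 0 < ℓ₂) :
    IntegrableOn (fun x : EuclideanSpace ℝ (Fin 2) =>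
        (x 0) ^ (-q) + (ℓ₁ - x 0) ^ (-q) + (x 1) ^ (-q) + (ℓ₂ - x 1) ^ (-q))
      (planeRect ℓ₁ ℓ₂) volume ∧
    ∫ x in planeRect ℓ₁ ℓ₂,
        ((x 0) ^ (-q) + (ℓ₁ - x 0) ^ (-q) + (x 1) ^ (-q) + (ℓ₂ - x 1) ^ (-q)) =
      2 * (ℓ₂ * ℓ₁ ^ (1-q) + ℓ₁ * ℓ₂ ^ (1-q)) / (1-q) := by
  have hfin₁ : volume (Ioo (0:ℝ) ℓ₁) < ⊤ := by simp [Real.volume_Ioo]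
  have hfin₂ : volume (Ioo (0:ℝ) ℓ₂) < ⊤ := by simp [Real.volume_Ioo]
  -- integrability of the four pieces on the product rectangle
  have mkint : ∀ (u : ℝ → ℝ), IntegrableOn u (Ioo (0:ℝ) ℓ₁) volume →
      IntegrableOn (fun z : ℝ × ℝ => u z.1) (Ioo (0:ℝ) ℓ₁ ×ˢ Ioo (0:ℝ) ℓ₂) volume := by
    intro u hu
    rw [IntegrableOn, Measure.volume_eq_prod, ← Measure.prod_restrict]
    simpa using hu.smul_prod (g := fun _ : ℝ => (1:ℝ))
      (integrableOn_const (C := (1:ℝ)) hfin₂.ne)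
  have mkint' : ∀ (u : ℝ → ℝ), IntegrableOn u (Ioo (0:ℝ) ℓ₂) volume →
      IntegrableOn (fun z : ℝ × ℝ => u z.2) (Ioo (0:ℝ) ℓ₁ ×ˢ Ioo (0:ℝ) ℓ₂) volume := by
    intro u hu
    rw [IntegrableOn, Measure.volume_eq_prod, ← Measure.prod_restrict]
    simpa using (integrableOn_const (C := (1:ℝ)) hfin₁.ne).smul_prod (g := u) hu
  have h1 := mkint _ (oneD_int q ℓ₁ hq1)
  have h2 := mkint _ (oneD_int' q ℓ₁ hq1)
  have h3 := mkint' _ (oneD_int q ℓ₂ hq1)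
  have h4 := mkint' _ (oneD_int' q ℓ₂ hq1)
  -- values of the four pieces
  have mkval : ∀ (u : ℝ → ℝ),
      ∫ z in Ioo (0:ℝ) ℓ₁ ×ˢ Ioo (0:ℝ) ℓ₂, u z.1 =
        (∫ t in Ioo (0:ℝ) ℓ₁, u t) * ℓ₂ := by
    intro u
    rw [Measure.volume_eq_prod]
    have := setIntegral_prod_mul (μ := (volume : Measure ℝ)) (ν := (volume : Measure ℝ))
      (f := u) (g := fun _ : ℝ => (1:ℝ)) (Ioo 0 ℓ₁) (Ioo 0 ℓ₂)
    simpa [Real.volume_Ioo, ENNReal.toReal_ofReal hℓ₂.le, max_eq_left hℓ₂.le] using this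
  have mkval' : ∀ (u : ℝ → ℝ),
      ∫ z in Ioo (0:ℝ) ℓ₁ ×ˢ Ioo (0:ℝ) ℓ₂, u z.2 =
        ℓ₁ * (∫ t in Ioo (0:ℝ) ℓ₂, u t) := by
    intro u
    rw [Measure.volume_eq_prod]
    have := setIntegral_prod_mul (μ := (volume : Measure ℝ)) (ν := (volume : Measure ℝ))
      (f := fun _ : ℝ => (1:ℝ)) (g := u) (Ioo 0 ℓ₁) (Ioo 0 ℓ₂)
    simpa [Real.volume_Ioo, ENNReal.toReal_ofReal hℓ₁.le, max_eq_left hℓ₁.le] using this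
  -- transfer through phi
  have hpre := phi_measurePreserving.integrableOn_comp_preimage phi_emb
    (f := fun x : EuclideanSpace ℝ (Fin 2) =>
      (x 0) ^ (-q) + (ℓ₁ - x 0) ^ (-q) + (x 1) ^ (-q) + (ℓ₂ - x 1) ^ (-q))
    (s := planeRect ℓ₁ ℓ₂)
  rw [phi_preimage] at hpre
  have hcomp : ((fun x : EuclideanSpace ℝ (Fin 2) =>
      (x 0) ^ (-q) + (ℓ₁ - x 0) ^ (-q) + (x 1) ^ (-q) + (ℓ₂ - x 1) ^ (-q)) ∘ phi) =
      fun z : ℝ × ℝ =>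
        z.1 ^ (-q) + (ℓ₁ - z.1) ^ (-q) + z.2 ^ (-q) + (ℓ₂ - z.2) ^ (-q) := rfl
  rw [hcomp] at hpre
  have hintZ : IntegrableOn (fun z : ℝ × ℝ =>
      z.1 ^ (-q) + (ℓ₁ - z.1) ^ (-q) + z.2 ^ (-q) + (ℓ₂ - z.2) ^ (-q))
      (Ioo (0:ℝ) ℓ₁ ×ˢ Ioo (0:ℝ) ℓ₂) volume := ((h1.add h2).add h3).add h4
  refine ⟨hpre.1 hintZ, ?_⟩
  have htrans := phi_measurePreserving.setIntegral_preimage_emb phi_emb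
    (fun x : EuclideanSpace ℝ (Fin 2) =>
      (x 0) ^ (-q) + (ℓ₁ - x 0) ^ (-q) + (x 1) ^ (-q) + (ℓ₂ - x 1) ^ (-q))
    (planeRect ℓ₁ ℓ₂)
  rw [phi_preimage] at htrans
  rw [← htrans]
  have hsplit : ∫ z in Ioo (0:ℝ) ℓ₁ ×ˢ Ioo (0:ℝ) ℓ₂,
      (z.1 ^ (-q) + (ℓ₁ - z.1) ^ (-q) + z.2 ^ (-q) + (ℓ₂ - z.2) ^ (-q)) =
      (∫ z in Ioo (0:ℝ) ℓ₁ ×ˢ Ioo (0:ℝ) ℓ₂, z.1 ^ (-q)) +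
      (∫ z in Ioo (0:ℝ) ℓ₁ ×ˢ Ioo (0:ℝ) ℓ₂, (ℓ₁ - z.1) ^ (-q)) +
      (∫ z in Ioo (0:ℝ) ℓ₁ ×ˢ Ioo (0:ℝ) ℓ₂, z.2 ^ (-q)) +
      (∫ z in Ioo (0:ℝ) ℓ₁ ×ˢ Ioo (0:ℝ) ℓ₂, (ℓ₂ - z.2) ^ (-q)) := by
    have A := integral_add ((h1.add h2).add h3) h4
    simp only [Pi.add_apply] at A
    have B := integral_add (h1.add h2) h3
    simp only [Pi.add_apply] at B
    have Cc := integral_add h1 h2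
    rw [A, B, Cc]
  calc ∫ z in Ioo (0:ℝ) ℓ₁ ×ˢ Ioo (0:ℝ) ℓ₂,
        ((fun x : EuclideanSpace ℝ (Fin 2) =>
          (x 0) ^ (-q) + (ℓ₁ - x 0) ^ (-q) + (x 1) ^ (-q) + (ℓ₂ - x 1) ^ (-q)) (phi z))
      = (∫ z in Ioo (0:ℝ) ℓ₁ ×ˢ Ioo (0:ℝ) ℓ₂, z.1 ^ (-q)) +
        (∫ z in Ioo (0:ℝ) ℓ₁ ×ˢ Ioo (0:ℝ) ℓ₂, (ℓ₁ - z.1) ^ (-q)) +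
        (∫ z in Ioo (0:ℝ) ℓ₁ ×ˢ Ioo (0:ℝ) ℓ₂, z.2 ^ (-q)) +
        (∫ z in Ioo (0:ℝ) ℓ₁ ×ˢ Ioo (0:ℝ) ℓ₂, (ℓ₂ - z.2) ^ (-q)) := hsplit
    _ = (ℓ₁ ^ (1-q) / (1-q)) * ℓ₂ + (ℓ₁ ^ (1-q) / (1-q)) * ℓ₂ +
        (ℓ₁ * (ℓ₂ ^ (1-q) / (1-q)) + ℓ₁ * (ℓ₂ ^ (1-q) / (1-q))) := by
        have e1 : ∫ z in Ioo (0:ℝ) ℓ₁ ×ˢ Ioo (0:ℝ) ℓ₂, z.1 ^ (-q) =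
            (∫ t in Ioo (0:ℝ) ℓ₁, t ^ (-q)) * ℓ₂ := mkval (fun t => t ^ (-q))
        have e2 : ∫ z in Ioo (0:ℝ) ℓ₁ ×ˢ Ioo (0:ℝ) ℓ₂, (ℓ₁ - z.1) ^ (-q) =
            (∫ t in Ioo (0:ℝ) ℓ₁, (ℓ₁ - t) ^ (-q)) * ℓ₂ := mkval (fun t => (ℓ₁ - t) ^ (-q))
        have e3 : ∫ z in Ioo (0:ℝ) ℓ₁ ×ˢ Ioo (0:ℝ) ℓ₂, z.2 ^ (-q) =
            ℓ₁ * (∫ t in Ioo (0:ℝ) ℓ₂, t ^ (-q)) := mkval' (fun t => t ^ (-q))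
        have e4 : ∫ z in Ioo (0:ℝ) ℓ₁ ×ˢ Ioo (0:ℝ) ℓ₂, (ℓ₂ - z.2) ^ (-q) =
            ℓ₁ * (∫ t in Ioo (0:ℝ) ℓ₂, (ℓ₂ - t) ^ (-q)) := mkval' (fun t => (ℓ₂ - t) ^ (-q))
        rw [e1, e2, e3, e4,
          oneD_val q ℓ₁ hq1 hℓ₁, oneD_val' q ℓ₁ hq1 hℓ₁,
          oneD_val q ℓ₂ hq1 hℓ₂, oneD_val' q ℓ₂ hq1 hℓ₂]
        ring
    _ = 2 * (ℓ₂ * ℓ₁ ^ (1-q) + ℓ₁ * ℓ₂ ^ (1-q)) / (1-q) := by ring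

end Rect

/-- Nonlocal boundary estimate: for `s ∈ (0,1)`, `p ∈ [1,∞)` with `sp < 1`
and the rectangle `B = (0,ℓ₁) × (0,ℓ₂)`, one has
`∫_B ∫_{Bᶜ} |x-y|^{-(2+sp)} dy dx ≤ C Per(B) min(ℓ₁,ℓ₂)^{1-sp}`
with `C = C(s,p)` and `Per(B) = 2(ℓ₁+ℓ₂)`. -/
theorem nonlocal_boundary_estimate (s p : ℝ) (hs : s ∈ Set.Ioo (0 : ℝ) 1)
    (hp : 1 ≤ p) (hsp : s * p < 1) :
    ∃ C > (0 : ℝ), ∀ ℓ₁ ℓ₂ : ℝ, 0 < ℓ₁ → 0 < ℓ₂ →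
      (∫ x in planeRect ℓ₁ ℓ₂, ∫ y in (planeRect ℓ₁ ℓ₂)ᶜ,
          ‖x - y‖ ^ (-(2 + s * p))) ≤
        C * (2 * (ℓ₁ + ℓ₂)) * (min ℓ₁ ℓ₂) ^ (1 - s * p) := by
  obtain ⟨hs0, hs1⟩ := hs
  have hq0 : 0 < s * p := mul_pos hs0 (lt_of_lt_of_le one_pos hp)
  set q : ℝ := s * p with hqdef
  have hq1 : q < 1 := hsp
  have hballC := ballC_pos
  refine ⟨4 * ballC / (q * (1 - q)),
    div_pos (by positivity) (mul_pos hq0 (by linarith)), ?_⟩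
  intro ℓ₁ ℓ₂ hℓ₁ hℓ₂
  obtain ⟨hGint, hGval⟩ := rect_integral q ℓ₁ ℓ₂ hq0 hq1 hℓ₁ hℓ₂
  set K : ℝ := 2 * ballC / q with hK
  have hKpos : 0 < K := by positivity
  have hmono : (∫ x in planeRect ℓ₁ ℓ₂, ∫ y in (planeRect ℓ₁ ℓ₂)ᶜ, ‖x - y‖ ^ (-(2 + q))) ≤
      ∫ x in planeRect ℓ₁ ℓ₂,
        K * ((x 0) ^ (-q) + (ℓ₁ - x 0) ^ (-q) + (x 1) ^ (-q) + (ℓ₂ - x 1) ^ (-q)) := by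
    refine integral_mono_of_nonneg ?_ (hGint.const_mul K) ?_
    · exact Filter.Eventually.of_forall fun x =>
        integral_nonneg fun y => Real.rpow_nonneg (norm_nonneg _) _
    · filter_upwards [ae_restrict_mem (planeRect_measurableSet ℓ₁ ℓ₂)] with x hx
      have hbound := inner_bound q ℓ₁ ℓ₂ hq0 x hx
      obtain ⟨⟨h1, h2⟩, h3, h4⟩ := hx
      have hsum : (min (min (x 0) (ℓ₁ - x 0)) (min (x 1) (ℓ₂ - x 1))) ^ (-q) ≤
          (x 0) ^ (-q) + (ℓ₁ - x 0) ^ (-q) + (x 1) ^ (-q) + (ℓ₂ - x 1) ^ (-q) := by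
        have n1 : (0:ℝ) ≤ (x 0) ^ (-q) := Real.rpow_nonneg h1.le _
        have n2 : (0:ℝ) ≤ (ℓ₁ - x 0) ^ (-q) := Real.rpow_nonneg (by linarith) _
        have n3 : (0:ℝ) ≤ (x 1) ^ (-q) := Real.rpow_nonneg h3.le _
        have n4 : (0:ℝ) ≤ (ℓ₂ - x 1) ^ (-q) := Real.rpow_nonneg (by linarith) _
        have hcase : min (min (x 0) (ℓ₁ - x 0)) (min (x 1) (ℓ₂ - x 1)) = x 0 ∨
            min (min (x 0) (ℓ₁ - x 0)) (min (x 1) (ℓ₂ - x 1)) = ℓ₁ - x 0 ∨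
            min (min (x 0) (ℓ₁ - x 0)) (min (x 1) (ℓ₂ - x 1)) = x 1 ∨
            min (min (x 0) (ℓ₁ - x 0)) (min (x 1) (ℓ₂ - x 1)) = ℓ₂ - x 1 := by
          rcases min_choice (min (x 0) (ℓ₁ - x 0)) (min (x 1) (ℓ₂ - x 1)) with h | h
          · rcases min_choice (x 0) (ℓ₁ - x 0) with h' | h'
            · exact Or.inl (h.trans h')
            · exact Or.inr (Or.inl (h.trans h'))
          · rcases min_choice (x 1) (ℓ₂ - x 1) with h' | h'
            · exact Or.inr (Or.inr (Or.inl (h.trans h')))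
            · exact Or.inr (Or.inr (Or.inr (h.trans h')))
        rcases hcase with h | h | h | h <;> rw [h] <;> linarith
      calc ∫ y in (planeRect ℓ₁ ℓ₂)ᶜ, ‖x - y‖ ^ (-(2 + q))
          ≤ 2 * ballC *
            ((min (min (x 0) (ℓ₁ - x 0)) (min (x 1) (ℓ₂ - x 1))) ^ (-q) / q) := hbound
        _ = K * (min (min (x 0) (ℓ₁ - x 0)) (min (x 1) (ℓ₂ - x 1))) ^ (-q) := by
            rw [hK]; ring
        _ ≤ K * ((x 0) ^ (-q) + (ℓ₁ - x 0) ^ (-q) + (x 1) ^ (-q) + (ℓ₂ - x 1) ^ (-q)) :=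
            mul_le_mul_of_nonneg_left hsum hKpos.le
  have hval : ∫ x in planeRect ℓ₁ ℓ₂,
      K * ((x 0) ^ (-q) + (ℓ₁ - x 0) ^ (-q) + (x 1) ^ (-q) + (ℓ₂ - x 1) ^ (-q)) =
      K * (2 * (ℓ₂ * ℓ₁ ^ (1-q) + ℓ₁ * ℓ₂ ^ (1-q)) / (1-q)) := by
    rw [MeasureTheory.integral_const_mul, hGval]
  have hr0 : (0:ℝ) < 1 - q := by linarith
  have hcb1 := cross_bound (1-q) ℓ₁ ℓ₂ hr0 (by linarith) hℓ₁ hℓ₂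
  have hcb2 := cross_bound (1-q) ℓ₂ ℓ₁ hr0 (by linarith) hℓ₂ hℓ₁
  rw [min_comm ℓ₂ ℓ₁] at hcb2
  have hMnn : (0:ℝ) ≤ (min ℓ₁ ℓ₂) ^ (1-q) :=
    Real.rpow_nonneg (le_min hℓ₁.le hℓ₂.le) _
  calc (∫ x in planeRect ℓ₁ ℓ₂, ∫ y in (planeRect ℓ₁ ℓ₂)ᶜ, ‖x - y‖ ^ (-(2 + q)))
      ≤ K * (2 * (ℓ₂ * ℓ₁ ^ (1-q) + ℓ₁ * ℓ₂ ^ (1-q)) / (1-q)) := by rw [← hval]; exact hmono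
    _ ≤ K * (2 * ((ℓ₁ + ℓ₂) * (min ℓ₁ ℓ₂) ^ (1-q) +
          (ℓ₁ + ℓ₂) * (min ℓ₁ ℓ₂) ^ (1-q)) / (1-q)) := by
        refine mul_le_mul_of_nonneg_left ((div_le_div_iff_of_pos_right hr0).2 (by linarith)) hKpos.le
    _ = 4 * ballC / (q * (1 - q)) * (2 * (ℓ₁ + ℓ₂)) * (min ℓ₁ ℓ₂) ^ (1 - q) := by
        rw [hK]
        field_simp
        ring
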